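/- (Corollary 4.10) MIA-refinement is compositional with respect to MIA-disjunction: for Modal Interface Automata with common input and output alphabets and states p, q, r, if p ⊑_MIA q then p ∨ r ⊑_MIA q ∨ r. -/

import Mathlib

/-- Transition labels: `none` is the silent action τ, `some a` a visible action. -/
abbrev Lbl (A : Type) : Type := Option A

/-- Weak internal transition: a (possibly empty) sequence of τ-steps. -/
def WeakEps {S A : Type} (tr : S → Lbl A → S → Prop) : S → S → Prop :=
  Relation.ReflTransGen (fun p q => tr p none q)

/-- Weak transition: τ-steps followed by one step labelled `α`. -/
def WeakTr {S A : Type} (tr : S → Lbl A → S → Prop) (p : S) (α : Lbl A) (p' : S) : Prop :=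
  ∃ p'', WeakEps tr p p'' ∧ tr p'' α p'

/-- State set of binary compositions: copies of both components plus combined states. -/
inductive CState (S T : Type) : Type
  | left : S → CState S T
  | right : T → CState S T
  | comb : S → T → CState S T

/-- `(must, may)` is a Modal Interface Automaton over inputs `I` and outputs `O`:
a syntactically consistent dMTS with labels in `I ∪ O`, at most one (disjunctive)
must-transition per input, and every input-may-transition underlies it. -/
def IsMIA {S A : Type} (I O : Set A) (must : S → A → Set S → Prop)
    (may : S → Lbl A → S → Prop) : Prop :=
  Disjoint I O ∧
  (∀ s a S', must s a S' → S'.Nonempty) ∧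
  (∀ s a S' s', must s a S' → s' ∈ S' → may s (some a) s') ∧
  (∀ s a S', must s a S' → a ∈ I ∪ O) ∧
  (∀ s a s', may s (some a) s' → a ∈ I ∪ O) ∧
  (∀ s i S' S'', i ∈ I → must s i S' → must s i S'' → S' = S'') ∧
  (∀ s i s', i ∈ I → may s (some i) s' → ∃ S', must s i S' ∧ s' ∈ S')

/-- Observational MIA-refinement relation: like modal refinement, but
may-transitions only need to be matched for outputs and τ. -/
def IsMIASim {S T A : Type} (O : Set A) (mustP : S → A → Set S → Prop)
    (mayP : S → Lbl A → S → Prop) (mustQ : T → A → Set T → Prop)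
    (mayQ : T → Lbl A → T → Prop) (R : S → T → Prop) : Prop :=
  ∀ p q, R p q →
    (∀ a Q', mustQ q a Q' → ∃ P', mustP p a P' ∧ ∀ p' ∈ P', ∃ q' ∈ Q', R p' q') ∧
    (∀ a p', a ∈ O → mayP p (some a) p' → ∃ q', WeakTr mayQ q (some a) q' ∧ R p' q') ∧
    (∀ p', mayP p none p' → ∃ q', WeakEps mayQ q q' ∧ R p' q')

/-- MIA-refinement `p ⊑_MIA q`. -/
def MIARef {S T A : Type} (O : Set A) (mustP : S → A → Set S → Prop)
    (mayP : S → Lbl A → S → Prop) (mustQ : T → A → Set T → Prop)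
    (mayQ : T → Lbl A → T → Prop) (p : S) (q : T) : Prop :=
  ∃ R, IsMIASim O mustP mayP mustQ mayQ R ∧ R p q

/-- Must-transitions of the dMTS-disjunction `P ∨ Q` (rule (Must) plus inherited ones). -/
inductive OrMust {S T A : Type} (mustP : S → A → Set S → Prop) (mustQ : T → A → Set T → Prop) :
    CState S T → A → Set (CState S T) → Prop
  | fromP {p a P'} : mustP p a P' → OrMust mustP mustQ (CState.left p) a (CState.left '' P')
  | fromQ {q a Q'} : mustQ q a Q' → OrMust mustP mustQ (CState.right q) a (CState.right '' Q')
  | comb {p q a P' Q'} : mustP p a P' → mustQ q a Q' →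
      OrMust mustP mustQ (CState.comb p q) a (CState.left '' P' ∪ CState.right '' Q')

/-- May-transitions of the dMTS-disjunction `P ∨ Q` (rules (May1), (May2) plus inherited ones). -/
inductive OrMay {S T A : Type} (mayP : S → Lbl A → S → Prop) (mayQ : T → Lbl A → T → Prop) :
    CState S T → Lbl A → CState S T → Prop
  | fromP {p α p'} : mayP p α p' → OrMay mayP mayQ (CState.left p) α (CState.left p')
  | fromQ {q α q'} : mayQ q α q' → OrMay mayP mayQ (CState.right q) α (CState.right q')
  | may1 {p q α p'} : mayP p α p' → OrMay mayP mayQ (CState.comb p q) α (CState.left p')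
  | may2 {p q α q'} : mayQ q α q' → OrMay mayP mayQ (CState.comb p q) α (CState.right q')

/-- May-transitions of the MIA-disjunction `P ∨ Q` (rules (May1), (May2) plus
inherited ones); for inputs, the other disjunct must also have the input. -/
inductive MOrMay {S T A : Type} (I : Set A) (mayP : S → Lbl A → S → Prop)
    (mayQ : T → Lbl A → T → Prop) : CState S T → Lbl A → CState S T → Prop
  | fromP {p α p'} : mayP p α p' → MOrMay I mayP mayQ (CState.left p) α (CState.left p')
  | fromQ {q α q'} : mayQ q α q' → MOrMay I mayP mayQ (CState.right q) α (CState.right q')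
  | may1 {p q α p'} : mayP p α p' → (∀ i, α = some i → i ∈ I → ∃ q', mayQ q (some i) q') →
      MOrMay I mayP mayQ (CState.comb p q) α (CState.left p')
  | may2 {p q α q'} : mayQ q α q' → (∀ i, α = some i → i ∈ I → ∃ p', mayP p (some i) p') →
      MOrMay I mayP mayQ (CState.comb p q) α (CState.right q')

/-- Auxiliary relation witnessing compositionality. -/
inductive DRel {S T U : Type} (R : S → T → Prop) : CState S U → CState T U → Prop
  | ll {p q} : R p q → DRel R (.left p) (.left q)
  | lc {p q r} : R p q → DRel R (.left p) (.comb q r)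
  | rr {r} : DRel R (.right r) (.right r)
  | cc {p q r} : R p q → DRel R (.comb p r) (.comb q r)

lemma eps_left {T U A : Type} {I : Set A} {mayQ : T → Lbl A → T → Prop}
    {mayR : U → Lbl A → U → Prop} {q q' : T} (h : WeakEps mayQ q q') :
    WeakEps (MOrMay I mayQ mayR) (CState.left q : CState T U) (CState.left q') :=
  Relation.ReflTransGen.lift (r := fun a b => mayQ a none b)
    (p := fun a b => MOrMay I mayQ mayR a none b) CState.left (fun _ _ h => MOrMay.fromP h) q q' h

lemma eps_right {T U A : Type} {I : Set A} {mayQ : T → Lbl A → T → Prop}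
    {mayR : U → Lbl A → U → Prop} {r r' : U} (h : WeakEps mayR r r') :
    WeakEps (MOrMay I mayQ mayR) (CState.right r : CState T U) (CState.right r') :=
  Relation.ReflTransGen.lift (r := fun a b => mayR a none b)
    (p := fun a b => MOrMay I mayQ mayR a none b) CState.right (fun _ _ h => MOrMay.fromQ h) r r' h

/-- Corollary 4.10: MIA-refinement is compositional w.r.t. MIA-disjunction. -/
theorem mia_disj_compositional {A S T U : Type} (I O : Set A)
    (mustP : S → A → Set S → Prop) (mayP : S → Lbl A → S → Prop)
    (mustQ : T → A → Set T → Prop) (mayQ : T → Lbl A → T → Prop)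
    (mustR : U → A → Set U → Prop) (mayR : U → Lbl A → U → Prop)
    (hP : IsMIA I O mustP mayP) (hQ : IsMIA I O mustQ mayQ) (hR : IsMIA I O mustR mayR)
    (p : S) (q : T) (r : U)
    (hpq : MIARef O mustP mayP mustQ mayQ p q) :
    MIARef O (OrMust mustP mustR) (MOrMay I mayP mayR)
      (OrMust mustQ mustR) (MOrMay I mayQ mayR)
      (CState.comb p r) (CState.comb q r) := by
  obtain ⟨R, hsim, hpq0⟩ := hpq
  have hdisj : Disjoint I O := hQ.1
  -- side conditions for (May1)/(May2) steps
  have sideτ : ∀ (V : Type) (may : V → Lbl A → V → Prop) (v : V),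
      ∀ i, (none : Lbl A) = some i → i ∈ I → ∃ v', may v (some i) v' := by
    intro V may v i h; cases h
  have sideO : ∀ {a : A}, a ∈ O → ∀ (V : Type) (may : V → Lbl A → V → Prop) (v : V),
      ∀ i, (some a : Lbl A) = some i → i ∈ I → ∃ v', may v (some i) v' := by
    intro a haO V may v i h hiI
    exact absurd ((Option.some.inj h) ▸ haO) (Set.disjoint_left.mp hdisj hiI)
  -- lifting a weak output transition of Q to one of Q ∨ R starting at a comb state
  have combTr : ∀ {a : A} {q q' : T} (r : U), a ∈ O → WeakTr mayQ q (some a) q' →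
      WeakTr (MOrMay I mayQ mayR) (CState.comb q r) (some a) (CState.left q') := by
    rintro a q q' r haO ⟨q'', heps, hstep⟩
    rcases heps.cases_head with rfl | ⟨q1, h1, heps'⟩
    · exact ⟨CState.comb q r, Relation.ReflTransGen.refl,
        MOrMay.may1 hstep (sideO haO _ _ _)⟩
    · exact ⟨CState.left q'',
        Relation.ReflTransGen.head (MOrMay.may1 h1 (sideτ _ _ _)) (eps_left heps'),
        MOrMay.fromP hstep⟩
  refine ⟨DRel R, ?_, DRel.cc hpq0⟩
  intro x y hxy
  cases hxy with
  | ll hR0 =>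
    rename_i p q
    refine ⟨?_, ?_, ?_⟩
    · intro a Q'' hmust
      cases hmust with
      | fromP h =>
        obtain ⟨P', hP', hmatch⟩ := (hsim _ _ hR0).1 a _ h
        refine ⟨CState.left '' P', OrMust.fromP hP', ?_⟩
        rintro _ ⟨p', hp', rfl⟩
        obtain ⟨q', hq', hRq⟩ := hmatch p' hp'
        exact ⟨CState.left q', ⟨q', hq', rfl⟩, DRel.ll hRq⟩
    · intro a p'' haO hmay
      cases hmay with
      | fromP h =>
        obtain ⟨q', ⟨q'', heps, hstep⟩, hRq⟩ := (hsim _ _ hR0).2.1 a _ haO h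
        exact ⟨CState.left q', ⟨CState.left q'', eps_left heps, MOrMay.fromP hstep⟩,
          DRel.ll hRq⟩
    · intro p'' hmay
      cases hmay with
      | fromP h =>
        obtain ⟨q', heps, hRq⟩ := (hsim _ _ hR0).2.2 _ h
        exact ⟨CState.left q', eps_left heps, DRel.ll hRq⟩
  | lc hR0 =>
    rename_i p q r0
    refine ⟨?_, ?_, ?_⟩
    · intro a Q'' hmust
      cases hmust with
      | comb h1 h2 =>
        obtain ⟨P', hP', hmatch⟩ := (hsim _ _ hR0).1 a _ h1
        refine ⟨CState.left '' P', OrMust.fromP hP', ?_⟩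
        rintro _ ⟨p', hp', rfl⟩
        obtain ⟨q', hq', hRq⟩ := hmatch p' hp'
        exact ⟨CState.left q', Or.inl ⟨q', hq', rfl⟩, DRel.ll hRq⟩
    · intro a p'' haO hmay
      cases hmay with
      | fromP h =>
        obtain ⟨q', hwk, hRq⟩ := (hsim _ _ hR0).2.1 a _ haO h
        exact ⟨CState.left q', combTr r0 haO hwk, DRel.ll hRq⟩
    · intro p'' hmay
      cases hmay with
      | fromP h =>
        obtain ⟨q', heps, hRq⟩ := (hsim _ _ hR0).2.2 _ h
        rcases heps.cases_head with rfl | ⟨q1, h1, heps'⟩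
        · exact ⟨CState.comb _ r0, Relation.ReflTransGen.refl, DRel.lc hRq⟩
        · exact ⟨CState.left q',
            Relation.ReflTransGen.head (MOrMay.may1 h1 (sideτ _ _ _)) (eps_left heps'),
            DRel.ll hRq⟩
  | rr =>
    rename_i r0
    refine ⟨?_, ?_, ?_⟩
    · intro a Q'' hmust
      cases hmust with
      | fromQ h =>
        refine ⟨CState.right '' _, OrMust.fromQ h, ?_⟩
        rintro _ ⟨r', hr', rfl⟩
        exact ⟨CState.right r', ⟨r', hr', rfl⟩, DRel.rr⟩
    · intro a p'' haO hmay
      cases hmay with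
      | fromQ h =>
        exact ⟨CState.right _, ⟨CState.right r0, Relation.ReflTransGen.refl,
          MOrMay.fromQ h⟩, DRel.rr⟩
    · intro p'' hmay
      cases hmay with
      | fromQ h =>
        exact ⟨CState.right _, Relation.ReflTransGen.single (MOrMay.fromQ h), DRel.rr⟩
  | cc hR0 =>
    rename_i p q r0
    refine ⟨?_, ?_, ?_⟩
    · intro a Q'' hmust
      cases hmust with
      | comb h1 h2 =>
        obtain ⟨P', hP', hmatch⟩ := (hsim _ _ hR0).1 a _ h1
        refine ⟨CState.left '' P' ∪ CState.right '' _, OrMust.comb hP' h2, ?_⟩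
        rintro _ (⟨p', hp', rfl⟩ | ⟨r', hr', rfl⟩)
        · obtain ⟨q', hq', hRq⟩ := hmatch p' hp'
          exact ⟨CState.left q', Or.inl ⟨q', hq', rfl⟩, DRel.ll hRq⟩
        · exact ⟨CState.right r', Or.inr ⟨r', hr', rfl⟩, DRel.rr⟩
    · intro a p'' haO hmay
      cases hmay with
      | may1 h _ =>
        obtain ⟨q', hwk, hRq⟩ := (hsim _ _ hR0).2.1 a _ haO h
        exact ⟨CState.left q', combTr r0 haO hwk, DRel.ll hRq⟩
      | may2 h _ =>
        exact ⟨CState.right _, ⟨CState.comb q r0, Relation.ReflTransGen.refl,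
          MOrMay.may2 h (sideO haO _ _ _)⟩, DRel.rr⟩
    · intro p'' hmay
      cases hmay with
      | may1 h _ =>
        obtain ⟨q', heps, hRq⟩ := (hsim _ _ hR0).2.2 _ h
        rcases heps.cases_head with rfl | ⟨q1, h1, heps'⟩
        · exact ⟨CState.comb _ r0, Relation.ReflTransGen.refl, DRel.lc hRq⟩
        · exact ⟨CState.left q',
            Relation.ReflTransGen.head (MOrMay.may1 h1 (sideτ _ _ _)) (eps_left heps'),
            DRel.ll hRq⟩
      | may2 h _ =>
        exact ⟨CState.right _, Relation.ReflTransGen.single (MOrMay.may2 h (sideτ _ _ _)),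
          DRel.rr⟩
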